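/- Let A, B, C, D ∈ ℝ with A² + B² ≠ 0, and let U ⊆ ℝ² be an open set on which cos(A·x+C) ≠ 0 and cos(B·y+D) ≠ 0. Define f : U → ℝ by f(x,y) = log((1 + tan(A·x+C)²)·(1 + tan(B·y+D)²)). Then f satisfies f_x·f_{xx} + f_y·f_{xy} − f_{xxx} − f_{xyy} = 0 and f_x·f_{yx} + f_y·f_{yy} − f_{yxx} − f_{yyy} = 0 on U. -/

import Mathlib

noncomputable def dx (f : ℝ → ℝ → ℝ) : ℝ → ℝ → ℝ := fun x y => deriv (fun t => f t y) x
noncomputable def dy (f : ℝ → ℝ → ℝ) : ℝ → ℝ → ℝ := fun x y => deriv (fun t => f x t) y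

/-- `E₁ f = f_x f_xx + f_y f_xy - f_xxx - f_xyy` (this is `D₁(λ,f)` for `λ` constant). -/
noncomputable def E1 (f : ℝ → ℝ → ℝ) : ℝ → ℝ → ℝ := fun x y =>
  dx f x y * dx (dx f) x y + dy f x y * dy (dx f) x y
    - dx (dx (dx f)) x y - dy (dy (dx f)) x y

/-- `E₂ f = f_x f_yx + f_y f_yy - f_yxx - f_yyy` (this is `D₂(λ,f)` for `λ` constant). -/
noncomputable def E2 (f : ℝ → ℝ → ℝ) : ℝ → ℝ → ℝ := fun x y =>
  dx f x y * dx (dy f) x y + dy f x y * dy (dy f) x y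
    - dx (dx (dy f)) x y - dy (dy (dy f)) x y


open Real Filter Topology




lemma one_add_tan_sq' {x : ℝ} (h : Real.cos x ≠ 0) :
    1 + Real.tan x ^ 2 = 1 / Real.cos x ^ 2 := by
  rw [Real.tan_eq_sin_div_cos]
  field_simp
  linarith [Real.sin_sq_add_cos_sq x]

lemma tanD (a c x : ℝ) (h : Real.cos (a*x+c) ≠ 0) :
    HasDerivAt (fun t => Real.tan (a*t+c)) (a * (1 + Real.tan (a*x+c)^2)) x := by
  have h1 : HasDerivAt (fun t : ℝ => a*t+c) a x := by
    simpa using ((hasDerivAt_id x).const_mul a).add_const c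
  have h2 := (Real.hasDerivAt_tan h).comp x h1
  refine h2.congr_deriv ?_
  rw [one_add_tan_sq' h]; ring

lemma sqD (a c x : ℝ) (h : Real.cos (a*x+c) ≠ 0) :
    HasDerivAt (fun t => 1 + Real.tan (a*t+c)^2)
      (2 * Real.tan (a*x+c) * (a * (1 + Real.tan (a*x+c)^2))) x := by
  have := ((tanD a c x h).pow 2).const_add 1
  refine this.congr_deriv ?_
  ring

lemma GD (a c x : ℝ) (h : Real.cos (a*x+c) ≠ 0) :
    HasDerivAt (fun t => Real.log (1 + Real.tan (a*t+c)^2)) (2*a*Real.tan (a*x+c)) x := by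
  have hpos : (0:ℝ) < 1 + Real.tan (a*x+c)^2 := by positivity
  have := (Real.hasDerivAt_log hpos.ne').comp x (sqD a c x h)
  refine this.congr_deriv ?_
  field_simp

lemma hev (a c x : ℝ) (h : Real.cos (a*x+c) ≠ 0) :
    ∀ᶠ t in 𝓝 x, Real.cos (a*t+c) ≠ 0 := by
  have : ContinuousAt (fun t => Real.cos (a*t+c)) x :=
    (Real.continuous_cos.comp ((continuous_const.mul continuous_id).add continuous_const)).continuousAt
  exact this.eventually_ne h

lemma D1 (a c x : ℝ) (h : Real.cos (a*x+c) ≠ 0) :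
    deriv (fun t => Real.log (1 + Real.tan (a*t+c)^2)) x = 2*a*Real.tan (a*x+c) :=
  (GD a c x h).deriv

lemma D2 (a c x : ℝ) (h : Real.cos (a*x+c) ≠ 0) :
    deriv (deriv (fun t => Real.log (1 + Real.tan (a*t+c)^2))) x
      = 2*a^2*(1 + Real.tan (a*x+c)^2) := by
  have heq : deriv (fun t => Real.log (1 + Real.tan (a*t+c)^2))
      =ᶠ[𝓝 x] (fun t => 2*a*Real.tan (a*t+c)) :=
    (hev a c x h).mono fun t ht => D1 a c t ht
  rw [heq.deriv_eq]
  have := (tanD a c x h).const_mul (2*a)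
  rw [this.deriv]
  ring

lemma D3 (a c x : ℝ) (h : Real.cos (a*x+c) ≠ 0) :
    deriv (deriv (deriv (fun t => Real.log (1 + Real.tan (a*t+c)^2)))) x
      = 4*a^3*Real.tan (a*x+c)*(1 + Real.tan (a*x+c)^2) := by
  have heq : deriv (deriv (fun t => Real.log (1 + Real.tan (a*t+c)^2)))
      =ᶠ[𝓝 x] (fun t => 2*a^2*(1 + Real.tan (a*t+c)^2)) :=
    (hev a c x h).mono fun t ht => D2 a c t ht
  rw [heq.deriv_eq]
  have := (sqD a c x h).const_mul (2*a^2)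
  rw [this.deriv]
  ring

lemma mainE1 (a c b d X Y : ℝ) (hx : Real.cos (a*X+c) ≠ 0) :
    E1 (fun x y => Real.log (1+Real.tan (a*x+c)^2) + Real.log (1+Real.tan (b*y+d)^2)) X Y = 0 := by
  set g : ℝ → ℝ := fun t => Real.log (1+Real.tan (a*t+c)^2) with hg
  set h : ℝ → ℝ := fun t => Real.log (1+Real.tan (b*t+d)^2) with hh
  have e1 : dx (fun x y => g x + h y) = fun x _ => deriv g x := by
    funext x y; simp only [dx]; exact deriv_add_const _
  have e2 : dy (fun x y => g x + h y) = fun _ y => deriv h y := by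
    funext x y; simp only [dy]; exact deriv_const_add _
  have e3 : dx (fun x (_ : ℝ) => deriv g x) = fun x _ => deriv (deriv g) x := by
    funext x y; simp only [dx]
  have e4 : dy (fun x (_ : ℝ) => deriv g x) = fun _ _ => (0:ℝ) := by
    funext x y; simp [dy]
  have e5 : dx (fun x (_ : ℝ) => deriv (deriv g) x) = fun x _ => deriv (deriv (deriv g)) x := by
    funext x y; simp only [dx]
  have e6 : dy (fun (_ _ : ℝ) => (0:ℝ)) = fun _ _ => (0:ℝ) := by
    funext x y; simp [dy]
  change E1 (fun x y => g x + h y) X Y = 0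
  simp only [E1, e1, e2, e3, e4, e5, e6, mul_zero, add_zero, sub_zero]
  rw [hg, D1 a c X hx, D2 a c X hx, D3 a c X hx]
  ring

lemma mainE2 (a c b d X Y : ℝ) (hy : Real.cos (b*Y+d) ≠ 0) :
    E2 (fun x y => Real.log (1+Real.tan (a*x+c)^2) + Real.log (1+Real.tan (b*y+d)^2)) X Y = 0 := by
  set g : ℝ → ℝ := fun t => Real.log (1+Real.tan (a*t+c)^2) with hg
  set h : ℝ → ℝ := fun t => Real.log (1+Real.tan (b*t+d)^2) with hh
  have e1 : dx (fun x y => g x + h y) = fun x _ => deriv g x := by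
    funext x y; simp only [dx]; exact deriv_add_const _
  have e2 : dy (fun x y => g x + h y) = fun _ y => deriv h y := by
    funext x y; simp only [dy]; exact deriv_const_add _
  have e3 : dy (fun (_ : ℝ) y => deriv h y) = fun _ y => deriv (deriv h) y := by
    funext x y; simp only [dy]
  have e4 : dx (fun (_ : ℝ) y => deriv h y) = fun _ _ => (0:ℝ) := by
    funext x y; simp [dx]
  have e5 : dy (fun (_ : ℝ) y => deriv (deriv h) y) = fun _ y => deriv (deriv (deriv h)) y := by
    funext x y; simp only [dy]
  have e6 : dx (fun (_ _ : ℝ) => (0:ℝ)) = fun _ _ => (0:ℝ) := by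
    funext x y; simp [dx]
  change E2 (fun x y => g x + h y) X Y = 0
  simp only [E2, e1, e2, e3, e4, e5, e6, mul_zero, zero_add, sub_zero]
  rw [hh, D1 b d Y hy, D2 b d Y hy, D3 b d Y hy]
  ring


theorem stmt5 (A B C D : ℝ) (hAB : A^2 + B^2 ≠ 0) (U : Set (ℝ × ℝ)) (hU : IsOpen U)
    (hcos1 : ∀ p ∈ U, Real.cos (A * p.1 + C) ≠ 0)
    (hcos2 : ∀ p ∈ U, Real.cos (B * p.2 + D) ≠ 0) :
    ∀ p ∈ U,
      E1 (fun x y => Real.log ((1 + Real.tan (A * x + C)^2) * (1 + Real.tan (B * y + D)^2))) p.1 p.2 = 0 ∧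
      E2 (fun x y => Real.log ((1 + Real.tan (A * x + C)^2) * (1 + Real.tan (B * y + D)^2))) p.1 p.2 = 0 := by
  intro p hp
  have hF : (fun x y => Real.log ((1 + Real.tan (A * x + C)^2) * (1 + Real.tan (B * y + D)^2)))
      = fun x y => Real.log (1 + Real.tan (A*x+C)^2) + Real.log (1 + Real.tan (B*y+D)^2) := by
    funext x y
    rw [Real.log_mul (by positivity) (by positivity)]
  rw [hF]
  exact ⟨mainE1 A C B D p.1 p.2 (hcos1 p hp), mainE2 A C B D p.1 p.2 (hcos2 p hp)⟩
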